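/- Let T be a hyponormal bilateral weighted shift on H with nonzero weight sequence (β_n)_{n∈ℤ}, M = lim_{n→+∞} |β_n| and m = lim_{n→−∞} |β_n|. Then the residual spectrum of T equals the open annulus {λ ∈ ℂ : m < |λ| < M}; that is, λI − T is injective with non-dense range if and only if m < |λ| < M. -/

import Mathlib

open scoped InnerProductSpace
open Filter

section ResidualAux

noncomputable def prodSeq' (a : ℕ → ℂ) : ℕ → ℂ
  | 0 => 1
  | (k+1) => a k * prodSeq' a k

noncomputable def annSeq (lam : ℂ) (β : ℤ → ℂ) : ℤ → ℂ := fun n =>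
  if 0 ≤ n then prodSeq' (fun k => (starRingEnd ℂ) lam / (starRingEnd ℂ) (β k)) n.toNat
  else prodSeq' (fun k => (starRingEnd ℂ) (β (-(k:ℤ)-1)) / (starRingEnd ℂ) lam) (-n).toNat

lemma annSeq_zero (lam : ℂ) (β : ℤ → ℂ) : annSeq lam β 0 = 1 := by
  simp [annSeq, prodSeq']

lemma annSeq_rec (lam : ℂ) (β : ℤ → ℂ) (hlam : lam ≠ 0) (hnz : ∀ n, β n ≠ 0) (n : ℤ) :
    (starRingEnd ℂ) lam * annSeq lam β n = (starRingEnd ℂ) (β n) * annSeq lam β (n+1) := by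
  have hlc : (starRingEnd ℂ) lam ≠ 0 := by simpa using hlam
  have hbc : (starRingEnd ℂ) (β n) ≠ 0 := by simpa using hnz n
  rcases le_or_gt 0 n with hn | hn
  · have h1 : (0:ℤ) ≤ n + 1 := by omega
    have h2 : (n+1).toNat = n.toNat + 1 := by omega
    have h3 : ((n.toNat : ℤ)) = n := by omega
    simp only [annSeq, if_pos hn, if_pos h1, h2, prodSeq', h3]
    field_simp
  · have h2 : ¬ (0:ℤ) ≤ n := by omega
    set k := (-(n+1)).toNat with hk
    have h3 : (-n).toNat = k + 1 := by omega
    have h4 : (-(k:ℤ)-1) = n := by omega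
    have h5 : annSeq lam β (n+1) =
        prodSeq' (fun k => (starRingEnd ℂ) (β (-(k:ℤ)-1)) / (starRingEnd ℂ) lam) k := by
      rcases eq_or_lt_of_le (show n + 1 ≤ 0 by omega) with h | h
      · have : k = 0 := by omega
        rw [this]
        simp [annSeq, h, prodSeq']
      · have : ¬ (0:ℤ) ≤ n+1 := by omega
        simp only [annSeq, if_neg this, ← hk]
    have h6 : annSeq lam β n = ((starRingEnd ℂ) (β n) / (starRingEnd ℂ) lam) *
        prodSeq' (fun k => (starRingEnd ℂ) (β (-(k:ℤ)-1)) / (starRingEnd ℂ) lam) k := by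
      simp only [annSeq, if_neg h2, h3, prodSeq', h4]
    rw [h6, h5]
    field_simp

lemma prodSeq'_summable {a : ℕ → ℂ} {r : ℝ} (hr0 : 0 ≤ r) (hr : r < 1)
    (h : ∀ᶠ k in atTop, ‖a k‖ ≤ r) :
    Summable fun k : ℕ => ‖prodSeq' a k‖ ^ (2:ℕ) := by
  refine summable_of_ratio_norm_eventually_le (r := r ^ (2:ℕ)) (by nlinarith) ?_
  filter_upwards [h] with k hk
  have h1 : ‖prodSeq' a (k+1)‖ = ‖a k‖ * ‖prodSeq' a k‖ := by
    simp [prodSeq', norm_mul]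
  rw [Real.norm_of_nonneg (by positivity), Real.norm_of_nonneg (by positivity), h1, mul_pow]
  exact mul_le_mul_of_nonneg_right (pow_le_pow_left₀ (norm_nonneg _) hk 2) (by positivity)

lemma annSeq_memℓp (lam : ℂ) (β : ℤ → ℂ)
    {M : ℝ} (hM : Tendsto (fun n : ℤ => ‖β n‖) atTop (nhds M))
    {m : ℝ} (hm : Tendsto (fun n : ℤ => ‖β n‖) atBot (nhds m))
    (hm1 : m < ‖lam‖) (hM1 : ‖lam‖ < M) :
    Memℓp (annSeq lam β) 2 := by
  have hm0 : (0:ℝ) ≤ m := ge_of_tendsto hm (Eventually.of_forall fun n => norm_nonneg _)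
  have hl0 : (0:ℝ) < ‖lam‖ := lt_of_le_of_lt hm0 hm1
  have hM0 : (0:ℝ) < M := lt_trans hl0 hM1
  apply memℓp_gen
  have hconv : ∀ f : ℤ → ℂ, (Summable fun n : ℤ => ‖f n‖ ^ (2:ℕ)) →
      Summable fun n : ℤ => ‖f n‖ ^ ((2:ENNReal).toReal) := by
    intro f hf
    refine hf.congr fun n => ?_
    rw [show ((2:ENNReal).toReal) = ((2:ℕ):ℝ) by norm_num, Real.rpow_natCast]
  apply hconv
  apply Summable.of_nat_of_neg
  · have heq : (fun k : ℕ => ‖annSeq lam β (k:ℤ)‖ ^ (2:ℕ)) =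
        fun k : ℕ => ‖prodSeq' (fun j => (starRingEnd ℂ) lam / (starRingEnd ℂ) (β j)) k‖ ^ (2:ℕ) := by
      funext k
      have : ((k:ℤ)).toNat = k := by omega
      simp [annSeq, Int.ofNat_nonneg, this]
    rw [heq]
    set c : ℝ := (‖lam‖ + M) / 2 with hc
    have hcpos : 0 < c := by positivity
    have hcM : c < M := by rw [hc]; linarith
    have hev : ∀ᶠ n : ℤ in atTop, c < ‖β n‖ := hM.eventually (eventually_gt_nhds hcM)
    obtain ⟨N, hN⟩ := eventually_atTop.mp hev
    refine prodSeq'_summable (r := ‖lam‖ / c) (by positivity) ?_ ?_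
    · rw [div_lt_one hcpos, hc]; linarith
    · rw [eventually_atTop]
      refine ⟨N.toNat, fun k hk => ?_⟩
      have hk' : N ≤ (k:ℤ) := by omega
      have hb := hN _ hk'
      have : ‖(starRingEnd ℂ) lam / (starRingEnd ℂ) (β (k:ℤ))‖ = ‖lam‖ / ‖β (k:ℤ)‖ := by
        rw [norm_div, RCLike.norm_conj, RCLike.norm_conj]
      rw [this]
      exact div_le_div_of_nonneg_left (norm_nonneg _) hcpos (le_of_lt hb)
  · have heq : (fun k : ℕ => ‖annSeq lam β (-(k:ℤ))‖ ^ (2:ℕ)) =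
        fun k : ℕ =>
          ‖prodSeq' (fun j => (starRingEnd ℂ) (β (-(j:ℤ)-1)) / (starRingEnd ℂ) lam) k‖ ^ (2:ℕ) := by
      funext k
      rcases Nat.eq_zero_or_pos k with hk | hk
      · subst hk; simp [annSeq, prodSeq']
      · have h1 : ¬ (0:ℤ) ≤ -(k:ℤ) := by omega
        have h2 : (-(-(k:ℤ))).toNat = k := by omega
        simp [annSeq, h1, h2, hk.ne']
    rw [heq]
    set c : ℝ := (m + ‖lam‖) / 2 with hc
    have hcpos : 0 < c := by positivity
    have hmc : m < c := by rw [hc]; linarith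
    have hev : ∀ᶠ n : ℤ in atBot, ‖β n‖ < c := hm.eventually (eventually_lt_nhds hmc)
    obtain ⟨N, hN⟩ := eventually_atBot.mp hev
    refine prodSeq'_summable (r := c / ‖lam‖) (by positivity) ?_ ?_
    · rw [div_lt_one hl0, hc]; linarith
    · rw [eventually_atTop]
      refine ⟨N.natAbs + 1, fun k hk => ?_⟩
      have hk' : -(k:ℤ) - 1 ≤ N := by omega
      have hb := hN _ hk'
      have : ‖(starRingEnd ℂ) (β (-(k:ℤ)-1)) / (starRingEnd ℂ) lam‖ = ‖β (-(k:ℤ)-1)‖ / ‖lam‖ := by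
        rw [norm_div, RCLike.norm_conj, RCLike.norm_conj]
      rw [this]
      exact (div_le_div_iff_of_pos_right hl0).mpr (le_of_lt hb)

variable {H : Type*} [NormedAddCommGroup H] [InnerProductSpace ℂ H] [CompleteSpace H]

omit [CompleteSpace H] in
lemma HilbertBasis.ext_inner' (e : HilbertBasis ℤ ℂ H) {u v : H}
    (h : ∀ n : ℤ, ⟪e n, u⟫_ℂ = ⟪e n, v⟫_ℂ) : u = v := by
  apply e.repr.injective
  apply lp.ext
  funext n
  rw [e.repr_apply_apply, e.repr_apply_apply]
  exact h n

omit [CompleteSpace H] in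
lemma coeff_tendsto_zero (e : HilbertBasis ℤ ℂ H) (x : H) :
    Tendsto (fun n : ℤ => ‖e.repr x n‖) atBot (nhds 0) ∧
      Tendsto (fun n : ℤ => ‖e.repr x n‖) atTop (nhds 0) := by
  have hs : Summable fun n : ℤ => ‖e.repr x n‖ ^ ((2 : ENNReal).toReal) :=
    (lp.memℓp (e.repr x)).summable (by norm_num)
  have hs2 : Summable fun n : ℤ => ‖e.repr x n‖ ^ (2 : ℕ) := by
    refine hs.congr fun n => ?_
    rw [show ((2:ENNReal).toReal) = ((2:ℕ):ℝ) by norm_num, Real.rpow_natCast]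
  have h0 : Tendsto (fun n : ℤ => ‖e.repr x n‖ ^ (2:ℕ)) cofinite (nhds 0) :=
    hs2.tendsto_cofinite_zero
  have h1 : Tendsto (fun n : ℤ => ‖e.repr x n‖) cofinite (nhds 0) := by
    have := (Real.continuous_sqrt.tendsto 0).comp h0
    simpa [Function.comp_def, Real.sqrt_sq (norm_nonneg _), Real.sqrt_zero] using this
  rw [Int.cofinite_eq, tendsto_sup] at h1
  exact h1

lemma shift_adjoint_apply (e : HilbertBasis ℤ ℂ H) (β : ℤ → ℂ) (T : H →L[ℂ] H)
    (hT : ∀ n : ℤ, T (e n) = β n • e (n + 1)) (n : ℤ) :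
    (ContinuousLinearMap.adjoint T) (e n) = (starRingEnd ℂ) (β (n-1)) • e (n-1) := by
  apply e.ext_inner'
  intro k
  rw [ContinuousLinearMap.adjoint_inner_right, hT, inner_smul_left, inner_smul_right]
  rcases eq_or_ne k (n-1) with hk | hk
  · subst hk
    have h1 : ⟪e (n-1+1), e n⟫_ℂ = 1 := by
      rw [orthonormal_iff_ite.mp e.orthonormal]
      simp [show n - 1 + 1 = n by ring]
    have h2 : ⟪e (n-1), e (n-1)⟫_ℂ = 1 := by
      rw [orthonormal_iff_ite.mp e.orthonormal]; simp
    rw [h1, h2]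
  · have h1 : ⟪e (k+1), e n⟫_ℂ = 0 := by
      rw [orthonormal_iff_ite.mp e.orthonormal]
      simp [show ¬ (k + 1 = n) by omega]
    have h2 : ⟪e k, e (n-1)⟫_ℂ = 0 := by
      rw [orthonormal_iff_ite.mp e.orthonormal]; simp [hk]
    rw [h1, h2, mul_zero, mul_zero]

end ResidualAux

/-- The residual spectrum of a hyponormal bilateral weighted shift with nonzero
weights is exactly the open annulus `{λ : m < ‖λ‖ < M}`: `λI - T` is injective
with non-dense range iff `m < ‖λ‖ < M`. -/
theorem residualSpectrum_of_hyponormal_bilateral_weighted_shift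
    {H : Type*} [NormedAddCommGroup H] [InnerProductSpace ℂ H] [CompleteSpace H]
    (e : HilbertBasis ℤ ℂ H) (β : ℤ → ℂ) (T : H →L[ℂ] H)
    (hT : ∀ n : ℤ, T (e n) = β n • e (n + 1))
    (hmono : ∀ n : ℤ, ‖β n‖ ≤ ‖β (n + 1)‖)
    (hnz : ∀ n : ℤ, β n ≠ 0)
    (M : ℝ) (hM : Filter.Tendsto (fun n : ℤ => ‖β n‖) Filter.atTop (nhds M))
    (m : ℝ) (hm : Filter.Tendsto (fun n : ℤ => ‖β n‖) Filter.atBot (nhds m)) :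
    {lam : ℂ | Function.Injective ⇑(lam • (1 : H →L[ℂ] H) - T) ∧
        ¬ DenseRange ⇑(lam • (1 : H →L[ℂ] H) - T)}
      = {lam : ℂ | m < ‖lam‖ ∧ ‖lam‖ < M} := by
  classical
  have mono : ∀ a b : ℤ, a ≤ b → ‖β a‖ ≤ ‖β b‖ := by
    intro a b hab
    exact Int.le_induction (motive := fun b _ => ‖β a‖ ≤ ‖β b‖) (le_refl _)
      (fun n _ ih => le_trans ih (hmono n)) b hab
  have hβM : ∀ n, ‖β n‖ ≤ M := fun n =>
    ge_of_tendsto hM (eventually_atTop.mpr ⟨n, fun k hk => mono n k hk⟩)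
  have hβm : ∀ n, m ≤ ‖β n‖ := fun n =>
    le_of_tendsto hm (eventually_atBot.mpr ⟨n, fun k hk => mono k n hk⟩)
  have hm0 : (0:ℝ) ≤ m := ge_of_tendsto hm (Eventually.of_forall fun n => norm_nonneg _)
  ext lam
  simp only [Set.mem_setOf_eq]
  set A : H →L[ℂ] H := lam • (1 : H →L[ℂ] H) - T with hA
  have hAapply : ∀ x : H, A x = lam • x - T x := by
    intro x
    simp [hA, ContinuousLinearMap.sub_apply, ContinuousLinearMap.smul_apply,
      ContinuousLinearMap.one_apply]
  constructor
  · rintro ⟨hinj, hnd⟩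
    -- extract a nonzero vector orthogonal to the range
    set S : Submodule ℂ H := LinearMap.range (A : H →ₗ[ℂ] H) with hS
    have hSne : Sᗮ ≠ ⊥ := by
      intro hbot
      apply hnd
      have htop : S.topologicalClosure = ⊤ := Submodule.topologicalClosure_eq_top_iff.mpr hbot
      have hdense : Dense (S : Set H) := by
        rw [Submodule.dense_iff_topologicalClosure_eq_top]
        exact htop
      have hrange : (S : Set H) = Set.range ⇑A := by
        rw [hS]
        exact LinearMap.coe_range _
      rw [hrange] at hdense
      exact hdense
    obtain ⟨y, hyS, hy0⟩ := Submodule.ne_bot_iff _ |>.mp hSne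
    have horth : ∀ x : H, ⟪A x, y⟫_ℂ = 0 := fun x =>
      (Submodule.mem_orthogonal S y).mp hyS (A x) ⟨x, rfl⟩
    have hrel : ∀ n : ℤ, (starRingEnd ℂ) lam * ⟪e n, y⟫_ℂ =
        (starRingEnd ℂ) (β n) * ⟪e (n+1), y⟫_ℂ := by
      intro n
      have h1 := horth (e n)
      rw [hAapply, hT n, inner_sub_left, inner_smul_left, inner_smul_left] at h1
      linear_combination h1
    have hexists : ∃ n : ℤ, ⟪e n, y⟫_ℂ ≠ 0 := by
      by_contra h
      push_neg at h
      exact hy0 (e.ext_inner' fun n => by rw [h n, inner_zero_right])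
    obtain ⟨n0, hn0⟩ := hexists
    have hlam : lam ≠ 0 := by
      intro h
      apply hn0
      have h2 := hrel (n0 - 1)
      rw [h] at h2
      simp only [map_zero, zero_mul] at h2
      have h3 : (starRingEnd ℂ) (β (n0-1)) ≠ 0 := by simpa using hnz (n0-1)
      have := (mul_eq_zero.mp h2.symm).resolve_left h3
      simpa [show n0 - 1 + 1 = n0 by ring] using this
    have hlamc : (starRingEnd ℂ) lam ≠ 0 := by simpa using hlam
    have hall : ∀ n : ℤ, ⟪e n, y⟫_ℂ ≠ 0 := by
      intro n
      rcases le_total n0 n with h | h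
      · refine Int.le_induction (motive := fun k _ => ⟪e k, y⟫_ℂ ≠ 0) hn0 (fun k _ ih => ?_) n h
        have h2 := hrel k
        intro hz
        rw [hz, mul_zero] at h2
        exact (mul_ne_zero hlamc ih) h2
      · refine Int.le_induction_down (motive := fun k _ => ⟪e k, y⟫_ℂ ≠ 0) hn0 (fun k _ ih => ?_) n h
        have h2 := hrel (k - 1)
        rw [show k - 1 + 1 = k by ring] at h2
        intro hz
        rw [hz, mul_zero] at h2
        exact (mul_ne_zero (by simpa using hnz (k-1)) ih) h2.symm
    have hnorm_rel : ∀ n : ℤ, ‖lam‖ * ‖⟪e n, y⟫_ℂ‖ = ‖β n‖ * ‖⟪e (n+1), y⟫_ℂ‖ := by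
      intro n
      have := congrArg norm (hrel n)
      simpa [norm_mul, RCLike.norm_conj] using this
    have htend := coeff_tendsto_zero e y
    have hcoef : ∀ n : ℤ, e.repr y n = ⟪e n, y⟫_ℂ := fun n => e.repr_apply_apply y n
    have hpos0 : 0 < ‖⟪e (0:ℤ), y⟫_ℂ‖ := norm_pos_iff.mpr (hall 0)
    constructor
    · -- m < ‖lam‖
      by_contra hc
      push_neg at hc
      have hlpos : 0 < ‖lam‖ := norm_pos_iff.mpr hlam
      have hdown : ∀ n : ℤ, n ≤ 0 → ‖⟪e (0:ℤ), y⟫_ℂ‖ ≤ ‖⟪e n, y⟫_ℂ‖ := by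
        refine Int.le_induction_down (motive := fun k _ => ‖⟪e (0:ℤ), y⟫_ℂ‖ ≤ ‖⟪e k, y⟫_ℂ‖) le_rfl
          (fun k _ ih => le_trans ih ?_)
        have h4 := hnorm_rel (k - 1)
        rw [show k - 1 + 1 = k by ring] at h4
        have h5 : ‖lam‖ * ‖⟪e k, y⟫_ℂ‖ ≤ ‖lam‖ * ‖⟪e (k-1), y⟫_ℂ‖ := by
          calc ‖lam‖ * ‖⟪e k, y⟫_ℂ‖ ≤ ‖β (k-1)‖ * ‖⟪e k, y⟫_ℂ‖ :=
                mul_le_mul_of_nonneg_right (le_trans hc (hβm (k-1))) (norm_nonneg _)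
            _ = ‖lam‖ * ‖⟪e (k-1), y⟫_ℂ‖ := h4.symm
        exact le_of_mul_le_mul_left h5 hlpos
      have hev2 : ∀ᶠ n : ℤ in atBot, ‖e.repr y n‖ < ‖⟪e (0:ℤ), y⟫_ℂ‖ :=
        htend.1.eventually (eventually_lt_nhds hpos0)
      obtain ⟨n, hn1, hn2⟩ := (hev2.and (eventually_le_atBot (0:ℤ))).exists
      rw [hcoef n] at hn1
      exact absurd (hdown n hn2) (not_le.mpr hn1)
    · -- ‖lam‖ < M
      by_contra hc
      push_neg at hc
      have hup : ∀ n : ℤ, 0 ≤ n → ‖⟪e (0:ℤ), y⟫_ℂ‖ ≤ ‖⟪e n, y⟫_ℂ‖ := by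
        refine Int.le_induction (motive := fun k _ => ‖⟪e (0:ℤ), y⟫_ℂ‖ ≤ ‖⟪e k, y⟫_ℂ‖) le_rfl
          (fun k _ ih => le_trans ih ?_)
        have hβpos : 0 < ‖β k‖ := norm_pos_iff.mpr (hnz k)
        have h5 : ‖β k‖ * ‖⟪e k, y⟫_ℂ‖ ≤ ‖β k‖ * ‖⟪e (k+1), y⟫_ℂ‖ := by
          calc ‖β k‖ * ‖⟪e k, y⟫_ℂ‖ ≤ ‖lam‖ * ‖⟪e k, y⟫_ℂ‖ :=
                mul_le_mul_of_nonneg_right (le_trans (hβM k) hc) (norm_nonneg _)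
            _ = ‖β k‖ * ‖⟪e (k+1), y⟫_ℂ‖ := hnorm_rel k
        exact le_of_mul_le_mul_left h5 hβpos
      have hev2 : ∀ᶠ n : ℤ in atTop, ‖e.repr y n‖ < ‖⟪e (0:ℤ), y⟫_ℂ‖ :=
        htend.2.eventually (eventually_lt_nhds hpos0)
      obtain ⟨n, hn1, hn2⟩ := (hev2.and (eventually_ge_atTop (0:ℤ))).exists
      rw [hcoef n] at hn1
      exact absurd (hup n hn2) (not_le.mpr hn1)
  · rintro ⟨hm1, hM1⟩
    have hlam : lam ≠ 0 := by
      intro h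
      rw [h, norm_zero] at hm1
      exact absurd hm1 (not_lt.mpr hm0)
    have hlpos : 0 < ‖lam‖ := norm_pos_iff.mpr hlam
    constructor
    · -- injectivity
      have hker : ∀ x : H, A x = 0 → x = 0 := by
        intro x hx
        have hTx : T x = lam • x := by
          have := hAapply x
          rw [hx] at this
          exact (sub_eq_zero.mp this.symm).symm
        have hrel : ∀ n : ℤ, lam * e.repr x n = β (n-1) * e.repr x (n-1) := by
          intro n
          have h1 : e.repr (T x) n = β (n-1) * e.repr x (n-1) := by
            rw [e.repr_apply_apply, ← ContinuousLinearMap.adjoint_inner_left,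
              shift_adjoint_apply e β T hT n, inner_smul_left, e.repr_apply_apply]
            simp
          have h2 : e.repr (T x) n = lam * e.repr x n := by
            rw [hTx, map_smul, lp.coeFn_smul, Pi.smul_apply, smul_eq_mul]
          rw [← h2, h1]
        have hev : ∀ᶠ n : ℤ in atTop, ‖lam‖ < ‖β n‖ := hM.eventually (eventually_gt_nhds hM1)
        obtain ⟨N, hN⟩ := eventually_atTop.mp hev
        have hcN : e.repr x N = 0 := by
          by_contra hc0
          have hpos : 0 < ‖e.repr x N‖ := norm_pos_iff.mpr hc0
          have hup : ∀ n : ℤ, N ≤ n → ‖e.repr x N‖ ≤ ‖e.repr x n‖ := by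
            refine Int.le_induction (motive := fun k _ => ‖e.repr x N‖ ≤ ‖e.repr x k‖) le_rfl
              (fun k hk ih => le_trans ih ?_)
            have h3 := hrel (k+1)
            rw [show k + 1 - 1 = k by ring] at h3
            have h4 : ‖lam‖ * ‖e.repr x (k+1)‖ = ‖β k‖ * ‖e.repr x k‖ := by
              have := congrArg norm h3
              simpa [norm_mul] using this
            have h5 : ‖lam‖ * ‖e.repr x k‖ ≤ ‖lam‖ * ‖e.repr x (k+1)‖ := by
              rw [h4]
              exact mul_le_mul_of_nonneg_right (le_of_lt (hN k hk)) (norm_nonneg _)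
            exact le_of_mul_le_mul_left h5 hlpos
          have hev2 : ∀ᶠ n : ℤ in atTop, ‖e.repr x n‖ < ‖e.repr x N‖ :=
            (coeff_tendsto_zero e x).2.eventually (eventually_lt_nhds hpos)
          obtain ⟨n, hn1, hn2⟩ := (hev2.and (eventually_ge_atTop N)).exists
          exact absurd (hup n hn2) (not_le.mpr hn1)
        have hzero : ∀ n : ℤ, e.repr x n = 0 := by
          intro n
          rcases le_total N n with h | h
          · refine Int.le_induction (motive := fun k _ => e.repr x k = 0) hcN (fun k _ ih => ?_) n h
            have h3 := hrel (k+1)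
            rw [show k + 1 - 1 = k by ring, ih, mul_zero] at h3
            exact (mul_eq_zero.mp h3).resolve_left hlam
          · refine Int.le_induction_down (motive := fun k _ => e.repr x k = 0) hcN
              (fun k _ ih => ?_) n h
            have h3 := hrel k
            rw [ih, mul_zero] at h3
            exact (mul_eq_zero.mp h3.symm).resolve_left (hnz (k-1))
        apply e.ext_inner'
        intro n
        rw [inner_zero_right, ← e.repr_apply_apply]
        exact hzero n
      intro x1 x2 hx
      have h1 : A (x1 - x2) = 0 := by
        rw [map_sub, sub_eq_zero]
        exact hx
      exact sub_eq_zero.mp (hker _ h1)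
    · -- non-dense range
      have hmem : Memℓp (annSeq lam β) 2 := annSeq_memℓp lam β hM hm hm1 hM1
      set y : H := e.repr.symm ⟨annSeq lam β, hmem⟩ with hy
      have hcoef : ∀ n : ℤ, ⟪e n, y⟫_ℂ = annSeq lam β n := by
        intro n
        rw [← e.repr_apply_apply, hy, LinearIsometryEquiv.apply_symm_apply]
      have hy0 : y ≠ 0 := by
        intro h
        have h1 := hcoef 0
        rw [h, inner_zero_right, annSeq_zero] at h1
        exact one_ne_zero h1.symm
      have hrec := annSeq_rec lam β hlam hnz
      have hadjy : ContinuousLinearMap.adjoint T y = (starRingEnd ℂ) lam • y := by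
        apply e.ext_inner'
        intro n
        rw [ContinuousLinearMap.adjoint_inner_right, hT n, inner_smul_left,
          inner_smul_right, hcoef, hcoef, ← hrec n]
      intro hd
      have horth : ∀ x : H, ⟪y, A x⟫_ℂ = 0 := by
        intro x
        have h1 : ⟪A x, y⟫_ℂ = 0 := by
          rw [hAapply, inner_sub_left, inner_smul_left,
            ← ContinuousLinearMap.adjoint_inner_right, hadjy, inner_smul_right]
          ring
        rw [← inner_conj_symm, h1, map_zero]
      have hclosed : IsClosed {u : H | ⟪y, u⟫_ℂ = 0} :=
        isClosed_eq (continuous_const.inner continuous_id) continuous_const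
      have hsub : Set.range ⇑A ⊆ {u : H | ⟪y, u⟫_ℂ = 0} := by
        rintro _ ⟨x, rfl⟩
        exact horth x
      have hymem : y ∈ {u : H | ⟪y, u⟫_ℂ = 0} := by
        have h2 : closure (Set.range ⇑A) = Set.univ := hd.closure_range
        have h3 := closure_minimal hsub hclosed
        rw [h2] at h3
        exact h3 (Set.mem_univ y)
      exact hy0 (inner_self_eq_zero.mp hymem)
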